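/- arXiv:math/9907176 — 3 statements merged into one kernel-verified Lean document; each statement's English description precedes it below -/
import Mathlib

section
/- For integers n ≥ 1 and a_1, ..., a_n with a_1 > 0, the expression ([a_1 + a_2 + ... + a_n] / [a_1]) · ∏_{i=1}^{n-1} qbinom(a_i + a_{i+1} - 1, a_{i+1}) is a polynomial in q with integer coefficients, i.e. belongs to ℤ[q]. -/
open Polynomial

noncomputable section

/-- The `q`-integer `[m] = (q^m - 1)/(q - 1)` in `ℚ(q)`, allowing integer `m`.
For `m ∈ ℕ` this is `1 + q + ⋯ + q^{m-1}`. -/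
def qintZ (m : ℤ) : RatFunc ℚ := (RatFunc.X ^ m - 1) / (RatFunc.X - 1)

/-- The `q`-factorial `[n]! = ∏_{k=1}^n [k]`. -/
def qfactF (n : ℕ) : RatFunc ℚ := ∏ k ∈ Finset.range n, qintZ (k + 1)

/-- The Gaussian binomial coefficient for integer arguments:
`qbinom(n, p) = 1` if `p = 0`, `0` if `p < 0` or `p > max(0, n)`, and
`[n]!/([p]! [n-p]!)` if `0 ≤ p ≤ n`. -/
def qbinomZ (n p : ℤ) : RatFunc ℚ :=
  if p = 0 then 1
  else if p < 0 ∨ p > max 0 n then 0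
  else qfactF n.toNat / (qfactF p.toNat * qfactF (n - p).toNat)

/-- `F_q(a_1, …, a_N) = ∏_{i=1}^{N-1} qbinom(a_i + a_{i+1} - 1, a_{i+1})`
(here `a i` is `a_{i+1}`, i.e. indices are shifted to start at `0`). -/
def Fq (N : ℕ) (a : ℕ → ℤ) : RatFunc ℚ :=
  ∏ i ∈ Finset.range (N - 1), qbinomZ (a i + a (i + 1) - 1) (a (i + 1))

end

noncomputable section Aux

open Finset

/-- The canonical ring map `ℤ[X] → ℚ(X)`. -/
def phiZ : Polynomial ℤ →+* RatFunc ℚ :=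
  (algebraMap (Polynomial ℚ) (RatFunc ℚ)).comp (mapRingHom (Int.castRingHom ℚ))

lemma phiZ_apply (P : Polynomial ℤ) :
    phiZ P = algebraMap (Polynomial ℚ) (RatFunc ℚ) (P.map (Int.castRingHom ℚ)) := rfl

lemma phiZ_X : phiZ Polynomial.X = RatFunc.X := by
  simp [phiZ_apply, RatFunc.algebraMap_X]

lemma phiZ_injective : Function.Injective phiZ := by
  refine (IsFractionRing.injective (Polynomial ℚ) (RatFunc ℚ)).comp ?_
  exact Polynomial.map_injective _ Int.cast_injective

lemma ratX_sub_one_ne_zero : (RatFunc.X : RatFunc ℚ) - 1 ≠ 0 := by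
  have h : phiZ (Polynomial.X - 1) = RatFunc.X - 1 := by
    rw [map_sub, map_one, phiZ_X]
  rw [← h, (map_ne_zero_iff phiZ phiZ_injective)]
  intro hc
  have := congrArg (Polynomial.eval (0 : ℤ)) hc
  simp at this

lemma qintZ_natCast (n : ℕ) :
    qintZ (n : ℤ) = phiZ (∑ i ∈ range n, Polynomial.X ^ i) := by
  have h : (∑ i ∈ range n, (RatFunc.X : RatFunc ℚ) ^ i) * (RatFunc.X - 1)
      = RatFunc.X ^ n - 1 := geom_sum_mul _ _
  rw [qintZ, zpow_natCast, ← h, mul_div_cancel_right₀ _ ratX_sub_one_ne_zero]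
  simp [map_sum, map_pow, phiZ_X]

lemma qintZ_natCast_ne_zero (n : ℕ) (h : 0 < n) : qintZ (n : ℤ) ≠ 0 := by
  rw [qintZ_natCast, ← map_zero phiZ]
  intro hc
  have := phiZ_injective hc
  have h1 : Polynomial.eval (1 : ℤ) (∑ i ∈ range n, Polynomial.X ^ i) = n := by
    simp
  rw [this] at h1
  simp at h1
  omega

lemma qintZ_ne_zero (m : ℤ) (h : 0 < m) : qintZ m ≠ 0 := by
  have : qintZ m = qintZ (m.toNat : ℤ) := by rw [Int.toNat_of_nonneg h.le]
  rw [this]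
  exact qintZ_natCast_ne_zero _ (by omega)

lemma qintZ_add (x y : ℤ) :
    qintZ (x + y) = qintZ x + RatFunc.X ^ x * qintZ y := by
  have hX : (RatFunc.X : RatFunc ℚ) ≠ 0 := RatFunc.X_ne_zero
  rw [qintZ, qintZ, qintZ, zpow_add₀ hX, ← mul_div_assoc, ← add_div]
  congr 1
  ring

lemma qfactF_ne_zero (n : ℕ) : qfactF n ≠ 0 := by
  rw [qfactF]
  exact Finset.prod_ne_zero_iff.mpr fun k _ => by
    have : ((k : ℤ) + 1) = ((k + 1 : ℕ) : ℤ) := by push_cast; ring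
    rw [this]; exact qintZ_natCast_ne_zero _ (Nat.succ_pos k)

lemma qfactF_succ (n : ℕ) : qfactF (n + 1) = qfactF n * qintZ (n + 1) := by
  rw [qfactF, qfactF, Finset.prod_range_succ]

/-- Gaussian binomial as rational function. -/
def gb (n p : ℕ) : RatFunc ℚ := qfactF n / (qfactF p * qfactF (n - p))

lemma qfactF_zero : qfactF 0 = 1 := by
  simp [qfactF]

lemma gb_zero_right (n : ℕ) : gb n 0 = 1 := by
  rw [gb, Nat.sub_zero, qfactF_zero, one_mul, div_self (qfactF_ne_zero n)]

lemma gb_self (n : ℕ) : gb n n = 1 := by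
  rw [gb, Nat.sub_self, qfactF_zero, mul_one, div_self (qfactF_ne_zero n)]

lemma gb_pascal (n p : ℕ) (h : p + 1 ≤ n) :
    gb (n + 1) (p + 1) = gb n p + RatFunc.X ^ (p + 1) * gb n (p + 1) := by
  have h1 : n + 1 - (p + 1) = n - p := by omega
  have h2 : n - p = (n - (p + 1)) + 1 := by omega
  have h3 : ((n : ℤ) + 1) = ((p : ℤ) + 1) + ((n - p : ℕ) : ℤ) := by
    omega
  have hadd : qintZ ((n : ℤ) + 1)
      = qintZ ((p : ℤ) + 1) + RatFunc.X ^ ((p : ℤ) + 1) * qintZ ((n - p : ℕ) : ℤ) := by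
    rw [h3, qintZ_add]
  have hz : (RatFunc.X : RatFunc ℚ) ^ ((p : ℤ) + 1) = RatFunc.X ^ (p + 1) := by
    rw [← zpow_natCast (RatFunc.X : RatFunc ℚ) (p + 1)]
    norm_num
  rw [hz] at hadd
  rw [gb, gb, gb, h1, qfactF_succ n, qfactF_succ p, h2, qfactF_succ (n - (p + 1))]
  have e1 : ((n - (p+1) : ℕ) : ℤ) + 1 = ((n - p : ℕ) : ℤ) := by push_cast [h2]; ring
  rw [e1]
  have A := qfactF_ne_zero p
  have B := qfactF_ne_zero (n - p)
  have C := qfactF_ne_zero (n - (p + 1))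
  have D := qintZ_natCast_ne_zero (p + 1) (by omega)
  have E := qintZ_natCast_ne_zero (n - p) (by omega)
  have D' : qintZ ((p : ℤ) + 1) ≠ 0 := by
    have : ((p : ℤ) + 1) = ((p + 1 : ℕ) : ℤ) := by push_cast; ring
    rw [this]; exact D
  field_simp
  rw [hadd]
  ring

lemma gb_mem (n p : ℕ) (h : p ≤ n) : gb n p ∈ phiZ.range := by
  induction n generalizing p with
  | zero =>
    interval_cases p
    rw [gb_zero_right]; exact one_mem _
  | succ n ih =>
    match p with
    | 0 => rw [gb_zero_right]; exact one_mem _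
    | q + 1 =>
      rcases eq_or_lt_of_le h with h' | h'
      · rw [← h', gb_self]; exact one_mem _
      · have hq : q + 1 ≤ n := by omega
        rw [gb_pascal n q hq]
        refine add_mem (ih q (by omega)) (mul_mem ?_ (ih (q + 1) hq))
        exact ⟨Polynomial.X ^ (q + 1), by rw [map_pow, phiZ_X]⟩

lemma qbinomZ_zero_right (n : ℤ) : qbinomZ n 0 = 1 := by simp [qbinomZ]

lemma qbinomZ_eq_gb (x p : ℤ) (hx : 0 < x) (hp : 0 < p) :
    qbinomZ (x + p - 1) p = gb (x + p - 1).toNat p.toNat := by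
  have hcond : ¬ (p < 0 ∨ p > max 0 (x + p - 1)) := by
    rw [not_or]
    refine ⟨by omega, ?_⟩
    rw [not_lt]
    exact le_max_of_le_right (by omega)
  have h1 : ((x + p - 1) - p).toNat = (x + p - 1).toNat - p.toNat := by omega
  rw [qbinomZ, if_neg (by omega : ¬ p = 0), if_neg hcond, h1, gb]

lemma qbinomZ_mem (x p : ℤ) (hx : 0 < x) (hp : 0 < p) :
    qbinomZ (x + p - 1) p ∈ phiZ.range := by
  rw [qbinomZ_eq_gb x p hx hp]
  exact gb_mem _ _ (by omega)

lemma qint_mul_qbinom (x p : ℤ) (hx : 0 < x) (hp : 0 < p) :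
    qintZ p * qbinomZ (x + p - 1) p
      = qintZ x * gb (x + p - 1).toNat (p.toNat - 1) := by
  rw [qbinomZ_eq_gb x p hx hp, gb, gb]
  have hN1 : (x + p - 1).toNat - p.toNat = x.toNat - 1 := by omega
  have hN2 : (x + p - 1).toNat - (p.toNat - 1) = (x.toNat - 1) + 1 := by omega
  rw [hN1, hN2]
  have e1 : qfactF p.toNat = qfactF (p.toNat - 1) * qintZ p := by
    conv_lhs => rw [show p.toNat = (p.toNat - 1) + 1 by omega]
    rw [qfactF_succ, show ((p.toNat - 1 : ℕ) : ℤ) + 1 = p by omega]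
  have e2 : qfactF ((x.toNat - 1) + 1) = qfactF (x.toNat - 1) * qintZ x := by
    rw [qfactF_succ, show ((x.toNat - 1 : ℕ) : ℤ) + 1 = x by omega]
  rw [e1, e2]
  have A := qfactF_ne_zero (p.toNat - 1)
  have B := qfactF_ne_zero (x.toNat - 1)
  have C := qintZ_ne_zero p hp
  have D := qintZ_ne_zero x hx
  field_simp

lemma V_mem (m : ℕ) (a : ℕ → ℤ) (pos : ∀ i < m, 0 < a i) :
    ∀ j, j < m → qintZ (a j) * (qintZ (a 0))⁻¹ *
      ∏ i ∈ range j, qbinomZ (a i + a (i + 1) - 1) (a (i + 1)) ∈ phiZ.range := by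
  intro j
  induction j with
  | zero =>
    intro hj
    rw [Finset.prod_range_zero, mul_one,
      mul_inv_cancel₀ (qintZ_ne_zero _ (pos 0 hj))]
    exact one_mem _
  | succ j ih =>
    intro hj
    have hj' : j < m := by omega
    have hxj : 0 < a j := pos j hj'
    have hxj1 : 0 < a (j + 1) := pos (j + 1) hj
    have key := qint_mul_qbinom (a j) (a (j + 1)) hxj hxj1
    rw [Finset.prod_range_succ]
    have expr_eq : qintZ (a (j + 1)) * (qintZ (a 0))⁻¹ *
        ((∏ i ∈ range j, qbinomZ (a i + a (i + 1) - 1) (a (i + 1))) *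
          qbinomZ (a j + a (j + 1) - 1) (a (j + 1)))
        = (qintZ (a j) * (qintZ (a 0))⁻¹ *
            ∏ i ∈ range j, qbinomZ (a i + a (i + 1) - 1) (a (i + 1))) *
          gb (a j + a (j + 1) - 1).toNat ((a (j + 1)).toNat - 1) := by
      linear_combination ((qintZ (a 0))⁻¹ *
        ∏ i ∈ range j, qbinomZ (a i + a (i + 1) - 1) (a (i + 1))) * key
    rw [expr_eq]
    exact mul_mem (ih hj') (gb_mem _ _ (by omega))

lemma qint_sum (m : ℕ) (a : ℕ → ℤ) :
    qintZ (∑ i ∈ range m, a i)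
      = ∑ j ∈ range m, RatFunc.X ^ (∑ i ∈ range j, a i) * qintZ (a j) := by
  induction m with
  | zero => simp [qintZ]
  | succ m ih =>
    rw [Finset.sum_range_succ (f := a), qintZ_add, ih, Finset.sum_range_succ]

lemma X_zpow_mem (s : ℤ) (hs : 0 ≤ s) :
    (RatFunc.X : RatFunc ℚ) ^ s ∈ phiZ.range := by
  refine ⟨Polynomial.X ^ s.toNat, ?_⟩
  rw [map_pow, phiZ_X, ← zpow_natCast, Int.toNat_of_nonneg hs]

lemma main_pos (m : ℕ) (hm : 1 ≤ m) (a : ℕ → ℤ) (pos : ∀ i < m, 0 < a i) :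
    qintZ (∑ i ∈ range m, a i) / qintZ (a 0) *
      (∏ i ∈ range (m - 1), qbinomZ (a i + a (i + 1) - 1) (a (i + 1)))
      ∈ phiZ.range := by
  rw [div_eq_mul_inv, qint_sum, Finset.sum_mul, Finset.sum_mul]
  refine sum_mem fun j hj => ?_
  rw [Finset.mem_range] at hj
  rw [← Finset.prod_range_mul_prod_Ico
    (fun i => qbinomZ (a i + a (i + 1) - 1) (a (i + 1))) (by omega : j ≤ m - 1)]
  have expr_eq : RatFunc.X ^ (∑ i ∈ range j, a i) * qintZ (a j) * (qintZ (a 0))⁻¹ *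
        ((∏ i ∈ range j, qbinomZ (a i + a (i + 1) - 1) (a (i + 1))) *
          ∏ i ∈ Finset.Ico j (m - 1), qbinomZ (a i + a (i + 1) - 1) (a (i + 1)))
      = RatFunc.X ^ (∑ i ∈ range j, a i) *
          ((qintZ (a j) * (qintZ (a 0))⁻¹ *
            ∏ i ∈ range j, qbinomZ (a i + a (i + 1) - 1) (a (i + 1))) *
          ∏ i ∈ Finset.Ico j (m - 1), qbinomZ (a i + a (i + 1) - 1) (a (i + 1))) := by
    ring
  rw [expr_eq]
  refine mul_mem (X_zpow_mem _ ?_) (mul_mem (V_mem m a pos j hj) ?_)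
  · exact Finset.sum_nonneg fun i hi =>
      (pos i (lt_trans (Finset.mem_range.mp hi) hj)).le
  · refine prod_mem fun i hi => ?_
    rw [Finset.mem_Ico] at hi
    exact qbinomZ_mem _ _ (pos i (by omega)) (pos (i + 1) (by omega))

lemma qbinomZ_eq_zero_of (x p : ℤ) (h : p < 0 ∨ (0 < p ∧ x ≤ 0)) :
    qbinomZ (x + p - 1) p = 0 := by
  rcases h with h | ⟨h1, h2⟩
  · rw [qbinomZ, if_neg (by omega : ¬ p = 0), if_pos (Or.inl h)]
  · rw [qbinomZ, if_neg (by omega : ¬ p = 0),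
      if_pos (Or.inr (max_lt h1 (by omega)))]

end Aux

/-- For integers `n ≥ 1` and `a_1, …, a_n` with `a_1 > 0`, the expression
`([a_1 + ⋯ + a_n]/[a_1]) · F_q(a_1, …, a_n)` is a polynomial in `q` with integer
coefficients, i.e. it belongs to `ℤ[q]`. -/
theorem qint_ratio_mul_Fq_mem_int_polynomials
    (n : ℕ) (hn : 1 ≤ n) (a : ℕ → ℤ) (ha : 0 < a 0) :
    ∃ P : Polynomial ℤ,
      qintZ (∑ i ∈ Finset.range n, a i) / qintZ (a 0) * Fq n a =
        algebraMap (Polynomial ℚ) (RatFunc ℚ) (P.map (Int.castRingHom ℚ)) := by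
  by_cases hz : ∃ i ∈ Finset.range (n - 1), qbinomZ (a i + a (i + 1) - 1) (a (i + 1)) = 0
  · obtain ⟨i, hi, h0⟩ := hz
    refine ⟨0, ?_⟩
    rw [Fq, Finset.prod_eq_zero hi h0]
    simp
  · push_neg at hz
    have key : ∀ i < n - 1, 0 ≤ a (i + 1) ∧ (0 < a (i + 1) → 0 < a i) := by
      intro i hi
      constructor
      · by_contra hlt
        exact hz i (Finset.mem_range.mpr hi)
          (qbinomZ_eq_zero_of _ _ (Or.inl (by omega)))
      · intro hpos
        by_contra hx
        exact hz i (Finset.mem_range.mpr hi)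
          (qbinomZ_eq_zero_of _ _ (Or.inr ⟨hpos, by omega⟩))
    by_cases hall : ∀ i < n, 0 < a i
    · obtain ⟨P, hP⟩ := main_pos n hn a hall
      exact ⟨P, by rw [Fq, ← hP, phiZ_apply]⟩
    · push_neg at hall
      have hQ : ∃ i, i < n ∧ a i ≤ 0 := by
        obtain ⟨i, hi, h⟩ := hall
        exact ⟨i, hi, by omega⟩
      set j := Nat.find hQ with hjdef
      obtain ⟨hjn, haj⟩ : j < n ∧ a j ≤ 0 := Nat.find_spec hQ
      have hposj : ∀ i < j, 0 < a i := by
        intro i hi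
        have := Nat.find_min hQ hi
        push_neg at this
        have := this (by omega)
        omega
      have hj1 : 1 ≤ j := by
        by_contra h
        have hj0 : j = 0 := by omega
        rw [hj0] at haj
        omega
      have hajz : a j = 0 := by
        have hj1n : j - 1 < n - 1 := by omega
        have := (key (j - 1) hj1n).1
        rw [show j - 1 + 1 = j by omega] at this
        omega
      have hzero : ∀ i, j ≤ i → i < n → a i = 0 := by
        intro i hji
        induction i, hji using Nat.le_induction with
        | base => exact fun _ => hajz
        | succ i hji ih =>
          intro hin
          have hi : i < n - 1 := by omega
          have hk := key i hi
          have hai : a i = 0 := ih (by omega)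
          have : ¬ 0 < a (i + 1) := fun hc => by
            have := hk.2 hc
            omega
          omega
      have hsum : ∑ i ∈ Finset.range n, a i = ∑ i ∈ Finset.range j, a i := by
        refine (Finset.sum_subset (Finset.range_subset_range.mpr hjn.le) ?_).symm
        intro x hx hnx
        rw [Finset.mem_range] at hx hnx
        exact hzero x (by omega) hx
      have hprod : Fq n a = ∏ i ∈ Finset.range (j - 1),
          qbinomZ (a i + a (i + 1) - 1) (a (i + 1)) := by
        rw [Fq]
        refine (Finset.prod_subset (Finset.range_subset_range.mpr (by omega)) ?_).symm
        intro x hx hnx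
        rw [Finset.mem_range] at hx hnx
        have : a (x + 1) = 0 := hzero (x + 1) (by omega) (by omega)
        rw [this, qbinomZ_zero_right]
      obtain ⟨P, hP⟩ := main_pos j hj1 a hposj
      exact ⟨P, by rw [hsum, hprod, ← hP, phiZ_apply]⟩
end

section
/- Let q_0 ≠ 1 be a primitive l-th root of unity, and let a_1, a_2 be positive integers with l dividing a_1. Then the (q - q_0)-adic valuation of the Gaussian binomial coefficient qbinom(a_1 + a_2 - 1, a_2) ∈ ℤ[q] equals 0 if l divides a_2, and equals 1 if l does not divide a_2. -/
open Polynomial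

noncomputable section

/-- The `q`-integer `[n] = 1 + q + ⋯ + q^{n-1}` in `ℂ[q]`. -/
def qintC (n : ℕ) : Polynomial ℂ := ∑ k ∈ Finset.range n, X ^ k

/-- The `q`-factorial `[n]!` in `ℂ[q]`. -/
def qfactC (n : ℕ) : Polynomial ℂ := ∏ k ∈ Finset.range n, qintC (k + 1)

/-- The Gaussian binomial coefficient `qbinom(n, p) = [n]!/([p]![n-p]!)`, which lies in
the polynomial ring: the quotient is exact, and is computed here by division by the
monic polynomial `[p]![n-p]!`. -/
def qbinomC (n p : ℕ) : Polynomial ℂ :=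
  if p ≤ n then qfactC n /ₘ (qfactC p * qfactC (n - p)) else 0

end

lemma qintC_mul_X_sub_one (n : ℕ) : qintC n * (X - 1) = X ^ n - 1 :=
  geom_sum_mul X n

lemma monic_qintC {n : ℕ} (hn : n ≠ 0) : (qintC n).Monic :=
  Polynomial.monic_geom_sum_X hn

lemma monic_qfactC (n : ℕ) : (qfactC n).Monic :=
  Polynomial.monic_prod_of_monic _ _ fun k _ => monic_qintC k.succ_ne_zero

lemma qfactC_ne_zero (n : ℕ) : qfactC n ≠ 0 := (monic_qfactC n).ne_zero

lemma eval_qintC (a : ℂ) (n : ℕ) : (qintC n).eval a = ∑ k ∈ Finset.range n, a ^ k := by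
  simp [qintC]

/-- multiplicity of a root `a ≠ 1` with `a ^ n = 1` in `X ^ n - 1` is exactly one. -/
lemma rm_X_pow_sub_one {a : ℂ} {n : ℕ} (hn : n ≠ 0) (ha : a ^ n = 1) :
    rootMultiplicity a (X ^ n - 1 : Polynomial ℂ) = 1 := by
  classical
  have hne : (X ^ n - 1 : Polynomial ℂ) ≠ 0 := by
    have := Polynomial.monic_X_pow_sub_C (1 : ℂ) hn
    simpa using this.ne_zero
  have hroot : IsRoot (X ^ n - 1 : Polynomial ℂ) a := by
    simp [IsRoot, ha]
  have hsep : (X ^ n - 1 : Polynomial ℂ).Separable := by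
    have := Polynomial.separable_X_pow_sub_C (F := ℂ) (n := n) 1
      (by exact_mod_cast Nat.cast_ne_zero.mpr hn) one_ne_zero
    simpa using this
  have hnodup := Polynomial.nodup_roots hsep
  have hle : (X ^ n - 1 : Polynomial ℂ).roots.count a ≤ 1 :=
    Multiset.nodup_iff_count_le_one.mp hnodup a
  rw [Polynomial.count_roots] at hle
  have hge : 0 < rootMultiplicity a (X ^ n - 1 : Polynomial ℂ) :=
    (Polynomial.rootMultiplicity_pos hne).mpr hroot
  omega

/-- root multiplicity of `a ≠ 1` in the `q`-integer `[n]`. -/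
lemma rm_qintC {a : ℂ} (ha : a ≠ 1) {n : ℕ} (hn : n ≠ 0) :
    rootMultiplicity a (qintC n) = if a ^ n = 1 then 1 else 0 := by
  have hX1 : rootMultiplicity a (X - 1 : Polynomial ℂ) = 0 := by
    apply Polynomial.rootMultiplicity_eq_zero
    simp [IsRoot, sub_eq_zero, ha]
  by_cases h : a ^ n = 1
  · have hmul : qintC n * (X - 1) ≠ 0 := by
      rw [qintC_mul_X_sub_one]
      have := Polynomial.monic_X_pow_sub_C (1 : ℂ) hn
      simpa using this.ne_zero
    have := Polynomial.rootMultiplicity_mul (x := a) hmul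
    rw [qintC_mul_X_sub_one, rm_X_pow_sub_one hn h, hX1] at this
    simp only [h, if_true]
    omega
  · rw [if_neg h]
    apply Polynomial.rootMultiplicity_eq_zero
    intro hroot
    apply h
    have : (qintC n * (X - 1)).eval a = 0 := by
      rw [Polynomial.eval_mul, hroot, zero_mul]
    rw [qintC_mul_X_sub_one] at this
    simp only [Polynomial.eval_sub, Polynomial.eval_pow, Polynomial.eval_X,
      Polynomial.eval_one, sub_eq_zero] at this
    exact this

/-- root multiplicity of a primitive `d`-th root of unity `a ≠ 1` in `[n]!` is `n / d`. -/
lemma rm_qfactC {a : ℂ} (ha : a ≠ 1) {d : ℕ} (hprim : IsPrimitiveRoot a d) (n : ℕ) :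
    rootMultiplicity a (qfactC n) = n / d := by
  induction n with
  | zero => simp [qfactC]
  | succ n ih =>
    have hstep : qfactC (n + 1) = qfactC n * qintC (n + 1) := Finset.prod_range_succ _ _
    have hne : qfactC n * qintC (n + 1) ≠ 0 := by
      rw [← hstep]; exact qfactC_ne_zero _
    rw [hstep, Polynomial.rootMultiplicity_mul hne, ih, rm_qintC ha n.succ_ne_zero,
      Nat.succ_div]
    congr 1
    simp only [hprim.pow_eq_one_iff_dvd]

lemma eval_qfactC_ne_zero {a : ℂ} (h : ∀ m : ℕ, m ≠ 0 → a ^ m ≠ 1) (n : ℕ) :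
    (qfactC n).eval a ≠ 0 := by
  rw [qfactC, Polynomial.eval_prod]
  apply Finset.prod_ne_zero_iff.mpr
  intro k _
  intro hzero
  have ha1 : a ≠ 1 := by
    intro h1
    exact h 1 one_ne_zero (by simp [h1])
  have : (qintC (k + 1) * (X - 1)).eval a = 0 := by
    rw [Polynomial.eval_mul, hzero, zero_mul]
  rw [qintC_mul_X_sub_one] at this
  simp only [Polynomial.eval_sub, Polynomial.eval_pow, Polynomial.eval_X,
    Polynomial.eval_one, sub_eq_zero] at this
  exact h (k + 1) k.succ_ne_zero this

lemma eval_qfactC_one_ne_zero (n : ℕ) : (qfactC n).eval 1 ≠ 0 := by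
  rw [qfactC, Polynomial.eval_prod]
  apply Finset.prod_ne_zero_iff.mpr
  intro k _
  have hval : (qintC (k + 1)).eval 1 = ((k : ℂ) + 1) := by
    rw [eval_qintC]
    simp [Finset.sum_const, nsmul_eq_mul]
  rw [hval]
  exact Nat.cast_add_one_ne_zero k

/-- The key divisibility: `[p]! [n-p]! ∣ [n]!` in `ℂ[q]`. -/
lemma qfact_mul_qfact_dvd {p n : ℕ} (h : p ≤ n) :
    qfactC p * qfactC (n - p) ∣ qfactC n := by
  classical
  have hne : qfactC p * qfactC (n - p) ≠ 0 :=
    mul_ne_zero (qfactC_ne_zero p) (qfactC_ne_zero (n - p))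
  apply Polynomial.Splits.dvd_of_roots_le_roots (IsAlgClosed.splits _) hne
  rw [Multiset.le_iff_count]
  intro a
  rw [Polynomial.count_roots, Polynomial.count_roots,
    Polynomial.rootMultiplicity_mul hne]
  by_cases ha1 : a = 1
  · subst ha1
    rw [Polynomial.rootMultiplicity_eq_zero (by simp [IsRoot, eval_qfactC_one_ne_zero]),
      Polynomial.rootMultiplicity_eq_zero (by simp [IsRoot, eval_qfactC_one_ne_zero])]
    exact Nat.zero_le _
  by_cases hfin : ∃ m : ℕ, m ≠ 0 ∧ a ^ m = 1
  · obtain ⟨m, hm0, hm1⟩ := hfin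
    have hfo : IsOfFinOrder a := by
      rw [isOfFinOrder_iff_pow_eq_one]
      exact ⟨m, Nat.pos_of_ne_zero hm0, hm1⟩
    have hprim : IsPrimitiveRoot a (orderOf a) := IsPrimitiveRoot.orderOf a
    rw [rm_qfactC ha1 hprim, rm_qfactC ha1 hprim, rm_qfactC ha1 hprim]
    calc p / orderOf a + (n - p) / orderOf a ≤ (p + (n - p)) / orderOf a :=
          Nat.add_div_le_add_div p (n - p) (orderOf a)
      _ = n / orderOf a := by rw [Nat.add_sub_cancel' h]
  · push_neg at hfin
    rw [Polynomial.rootMultiplicity_eq_zero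
        (by simp only [IsRoot]; exact eval_qfactC_ne_zero hfin p),
      Polynomial.rootMultiplicity_eq_zero
        (by simp only [IsRoot]; exact eval_qfactC_ne_zero hfin (n - p))]
    exact Nat.zero_le _

lemma nat_div_helper1 {l m : ℕ} (hl : 0 < l) (hm : 0 < m) : (l * m - 1) / l = m - 1 := by
  have h1 : l * 1 ≤ l * m := Nat.mul_le_mul_left l hm
  have h2 : (m - 1) * l = l * m - l := by rw [Nat.sub_mul, one_mul, mul_comm]
  have h3 : (m - 1 + 1) * l = l * m := by rw [Nat.sub_add_cancel hm, mul_comm]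
  refine Nat.div_eq_of_lt_le ?_ ?_ <;> omega

lemma nat_div_helper2 {l m r : ℕ} (hl : 0 < l) (hr : 0 < r) (hrl : r < l) :
    (l * m + r - 1) / l = m := by
  have h1 : l * m + r - 1 = l * m + (r - 1) := by omega
  rw [h1, Nat.mul_add_div hl, Nat.div_eq_of_lt (by omega), add_zero]

/-- Let `q₀ ≠ 1` be a primitive `l`-th root of unity and `a₁, a₂` positive integers with
`l ∣ a₁`. Then the `(q - q₀)`-adic valuation (order of vanishing at `q₀`) of
`qbinom(a₁ + a₂ - 1, a₂)` is `0` if `l ∣ a₂` and `1` if `l ∤ a₂`. -/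
theorem rootMultiplicity_qbinom
    (l : ℕ) (q₀ : ℂ) (hq₀ : q₀ ≠ 1) (hprim : IsPrimitiveRoot q₀ l)
    (a₁ a₂ : ℕ) (h₁ : 0 < a₁) (h₂ : 0 < a₂) (hl : l ∣ a₁) :
    rootMultiplicity q₀ (qbinomC (a₁ + a₂ - 1) a₂) = (if l ∣ a₂ then 0 else 1) := by
  classical
  have hl0 : 0 < l := by
    rcases Nat.eq_zero_or_pos l with h | h
    · exfalso; subst h; rw [Nat.zero_dvd] at hl; omega
    · exact h
  obtain ⟨b, hb⟩ := hl
  have hb0 : 0 < b := by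
    rcases Nat.eq_zero_or_pos b with h | h
    · exfalso; subst h; simp at hb; omega
    · exact h
  set n := a₁ + a₂ - 1 with hn
  have hpn : a₂ ≤ n := by omega
  have hsub : n - a₂ = a₁ - 1 := by omega
  set D := qfactC a₂ * qfactC (a₁ - 1) with hD
  have hbinom : qbinomC n a₂ = qfactC n /ₘ D := by
    rw [qbinomC, if_pos hpn, hsub]
  have hdvd : D ∣ qfactC n := by
    have := qfact_mul_qfact_dvd hpn
    rwa [hsub] at this
  have hmonic : D.Monic := (monic_qfactC _).mul (monic_qfactC _)
  have heq : qfactC n = D * (qfactC n /ₘ D) := by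
    have hmod : qfactC n %ₘ D = 0 := (Polynomial.modByMonic_eq_zero_iff_dvd hmonic).mpr hdvd
    have := Polynomial.modByMonic_add_div (qfactC n) D
    rw [hmod, zero_add] at this
    exact this.symm
  have hDne : D ≠ 0 := hmonic.ne_zero
  have hprodne : D * (qfactC n /ₘ D) ≠ 0 := by rw [← heq]; exact qfactC_ne_zero n
  have hsplit : rootMultiplicity q₀ (qfactC n) =
      rootMultiplicity q₀ D + rootMultiplicity q₀ (qfactC n /ₘ D) := by
    conv_lhs => rw [heq]
    exact Polynomial.rootMultiplicity_mul hprodne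
  have hDval : rootMultiplicity q₀ D =
      rootMultiplicity q₀ (qfactC a₂) + rootMultiplicity q₀ (qfactC (a₁ - 1)) :=
    Polynomial.rootMultiplicity_mul (mul_ne_zero (qfactC_ne_zero _) (qfactC_ne_zero _))
  rw [rm_qfactC hq₀ hprim] at hsplit
  rw [rm_qfactC hq₀ hprim, rm_qfactC hq₀ hprim] at hDval
  have e1 : (a₁ - 1) / l = b - 1 := by
    rw [hb]; exact nat_div_helper1 hl0 hb0
  by_cases hla : l ∣ a₂
  · obtain ⟨c, hc⟩ := hla
    have hc0 : 0 < c := by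
      rcases Nat.eq_zero_or_pos c with h | h
      · exfalso; subst h; simp at hc; omega
      · exact h
    have e2 : a₂ / l = c := by rw [hc, Nat.mul_div_cancel_left c hl0]
    have e3 : n / l = b + c - 1 := by
      have hne : n = l * (b + c) - 1 := by rw [mul_add]; omega
      rw [hne, nat_div_helper1 hl0 (by omega)]
    rw [e2, e1] at hDval
    rw [e3] at hsplit
    rw [if_pos ⟨c, hc⟩, hbinom]
    omega
  · have hr0 : a₂ % l ≠ 0 := fun h => hla (Nat.dvd_of_mod_eq_zero h)
    have hrl : a₂ % l < l := Nat.mod_lt a₂ hl0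
    have hmod : l * (a₂ / l) + a₂ % l = a₂ := Nat.div_add_mod a₂ l
    have e3 : n / l = b + a₂ / l := by
      have hne : n = l * (b + a₂ / l) + a₂ % l - 1 := by rw [mul_add]; omega
      rw [hne, nat_div_helper2 hl0 (by omega) hrl]
    rw [e1] at hDval
    rw [e3] at hsplit
    rw [if_neg hla, hbinom]
    omega
end

section
/- In the ring of formal power series in one variable X over ℤ[q], the identity ∏_{s=0}^{n-1} (1 - q^s X)^{-1} = ∑_{k≥0} qbinom(n+k-1, k) X^k holds for every n ∈ ℕ. Equivalently, ∑_{k≥0} qbinom(n+k-1,k) X^k · ∏_{s=0}^{n-1}(1 - q^s X) = 1. -/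
open Polynomial

noncomputable section

/-- The `q`-integer `[n] = 1 + q + ⋯ + q^{n-1}` in `ℤ[q]`. -/
def qint (n : ℕ) : Polynomial ℤ := ∑ k ∈ Finset.range n, X ^ k

/-- The `q`-factorial `[n]!` in `ℤ[q]`. -/
def qfact (n : ℕ) : Polynomial ℤ := ∏ k ∈ Finset.range n, qint (k + 1)

/-- The Gaussian binomial coefficient `qbinom(n, p) = [n]!/([p]![n-p]!) ∈ ℤ[q]`; the
quotient is exact and is computed by division by the monic polynomial `[p]![n-p]!`. -/
def qbinom (n p : ℕ) : Polynomial ℤ :=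
  if p ≤ n then qfact n /ₘ (qfact p * qfact (n - p)) else 0

/-- Gaussian binomial via the Pascal recurrence. -/
def qb : ℕ → ℕ → Polynomial ℤ
  | _, 0 => 1
  | 0, _ + 1 => 0
  | n + 1, p + 1 => X ^ (n - p) * qb n p + qb n (p + 1)

end

lemma qint_succ (m : ℕ) : qint (m + 1) = qint m + X ^ m := by
  rw [qint, Finset.sum_range_succ, ← qint]

lemma qint_add (a b : ℕ) : qint (a + b) = qint a + X ^ a * qint b := by
  induction b with
  | zero => simp [qint]
  | succ b ih =>
      rw [← Nat.add_assoc, qint_succ, ih, qint_succ, pow_add]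
      ring

lemma qint_monic (n : ℕ) : (qint (n + 1)).Monic := by
  simpa [qint] using Polynomial.monic_geom_sum_X (R := ℤ) (Nat.succ_ne_zero n)

lemma qfact_monic (n : ℕ) : (qfact n).Monic :=
  Polynomial.monic_prod_of_monic _ _ fun k _ => qint_monic k

lemma qb_eq_zero {n p : ℕ} (h : n < p) : qb n p = 0 := by
  induction n generalizing p with
  | zero => cases p with | zero => omega | succ p => rfl
  | succ n ih =>
      cases p with
      | zero => omega
      | succ p =>
          show X ^ (n - p) * qb n p + qb n (p + 1) = 0
          rw [ih (by omega), ih (by omega)]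
          ring

lemma qb_mul (n p : ℕ) (h : p ≤ n) :
    qb n p * (qfact p * qfact (n - p)) = qfact n := by
  induction n generalizing p with
  | zero =>
      interval_cases p
      simp [qb, qfact]
  | succ n ih =>
      cases p with
      | zero => simp [qb, qfact]
      | succ p =>
          have hpn : p ≤ n := by omega
          have hsub : n + 1 - (p + 1) = n - p := by omega
          show (X ^ (n - p) * qb n p + qb n (p + 1)) *
              (qfact (p + 1) * qfact (n + 1 - (p + 1))) = qfact (n + 1)
          rw [hsub]
          have hq1 : qfact (p + 1) = qfact p * qint (p + 1) := Finset.prod_range_succ _ _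
          have hq2 : qfact (n + 1) = qfact n * qint (n + 1) := Finset.prod_range_succ _ _
          rcases eq_or_lt_of_le hpn with rfl | hlt
          · rw [qb_eq_zero (Nat.lt_succ_self p), Nat.sub_self]
            simp only [pow_zero, one_mul, mul_zero, add_zero]
            rw [hq1]
            have hi := ih p le_rfl
            rw [Nat.sub_self] at hi
            calc qb p p * (qfact p * qint (p + 1) * qfact 0)
                = qb p p * (qfact p * qfact 0) * qint (p + 1) := by ring
              _ = qfact p * qint (p + 1) := by rw [hi]
          · -- p < n
            have hnp : n - p = (n - p - 1) + 1 := by omega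
            have hq3 : qfact (n - p) = qfact (n - p - 1) * qint (n - p) := by
              rw [hnp]; exact Finset.prod_range_succ _ _
            have ih1 := ih p hpn
            have ih2 := ih (p + 1) hlt
            have hsub2 : n - (p + 1) = n - p - 1 := by omega
            rw [hsub2] at ih2
            have hint : qint (n + 1) = qint (n - p) + X ^ (n - p) * qint (p + 1) := by
              have : n + 1 = (n - p) + (p + 1) := by omega
              rw [this, qint_add]
            rw [hq2, hint]
            calc (X ^ (n - p) * qb n p + qb n (p + 1)) * (qfact (p + 1) * qfact (n - p))
                = X ^ (n - p) * qint (p + 1) * (qb n p * (qfact p * qfact (n - p)))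
                  + qint (n - p) * (qb n (p + 1) * (qfact (p + 1) * qfact (n - p - 1))) := by
                  rw [hq1, hq3]; ring
              _ = qfact n * (qint (n - p) + X ^ (n - p) * qint (p + 1)) := by
                  rw [ih1, ih2]; ring

lemma qbinom_eq_qb (n p : ℕ) : qbinom n p = qb n p := by
  unfold qbinom
  split_ifs with h
  · rw [← qb_mul n p h, mul_comm,
      Polynomial.mul_divByMonic_cancel_left _ ((qfact_monic p).mul (qfact_monic (n - p)))]
  · rw [qb_eq_zero (by omega)]

lemma qb_zero_right (n : ℕ) : qb n 0 = 1 := by cases n <;> rfl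

lemma qbinom_step (n : ℕ) :
    (PowerSeries.mk fun k => qbinom (n + 1 + k - 1) k) *
      (1 - PowerSeries.C (R := Polynomial ℤ) (Polynomial.X ^ n) * PowerSeries.X) =
      (PowerSeries.mk fun k => qbinom (n + k - 1) k) := by
  refine PowerSeries.ext fun k => ?_
  rw [mul_sub, mul_one, map_sub, PowerSeries.coeff_mk]
  rw [show (PowerSeries.mk fun k => qbinom (n + 1 + k - 1) k) *
      (PowerSeries.C (R := Polynomial ℤ) (Polynomial.X ^ n) * PowerSeries.X)
    = PowerSeries.C (R := Polynomial ℤ) (Polynomial.X ^ n) *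
      ((PowerSeries.mk fun k => qbinom (n + 1 + k - 1) k) * PowerSeries.X) by ring]
  rw [PowerSeries.coeff_C_mul]
  cases k with
  | zero =>
      rw [PowerSeries.coeff_zero_mul_X, mul_zero, sub_zero, PowerSeries.coeff_mk]
      simp only [Nat.add_zero]
      rw [qbinom_eq_qb, qbinom_eq_qb, qb_zero_right, qb_zero_right]
  | succ j =>
      rw [PowerSeries.coeff_succ_mul_X, PowerSeries.coeff_mk, PowerSeries.coeff_mk]
      have h1 : n + 1 + (j + 1) - 1 = (n + j) + 1 := by omega
      have h2 : n + 1 + j - 1 = n + j := by omega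
      have h3 : n + (j + 1) - 1 = n + j := by omega
      rw [h1, h2, h3, qbinom_eq_qb, qbinom_eq_qb, qbinom_eq_qb]
      show X ^ (n + j - j) * qb (n + j) j + qb (n + j) (j + 1) - X ^ n * qb (n + j) j
        = qb (n + j) (j + 1)
      rw [show n + j - j = n by omega]
      ring

/-- In the ring of formal power series in one variable `X` over `ℤ[q]`, the identity
`∏_{s=0}^{n-1}(1 - q^s X)^{-1} = ∑_{k≥0} qbinom(n+k-1, k) X^k` holds for every `n`,
stated in the equivalent form
`(∑_{k≥0} qbinom(n+k-1, k) X^k) · ∏_{s=0}^{n-1}(1 - q^s X) = 1`. -/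
theorem qbinom_generating_identity (n : ℕ) :
    (PowerSeries.mk fun k => qbinom (n + k - 1) k) *
        ∏ s ∈ Finset.range n,
          (1 - PowerSeries.C (R := Polynomial ℤ) (Polynomial.X ^ s) * PowerSeries.X) = 1 := by
  induction n with
  | zero =>
      rw [Finset.prod_range_zero, mul_one]
      refine PowerSeries.ext fun k => ?_
      rw [PowerSeries.coeff_mk, PowerSeries.coeff_one]
      cases k with
      | zero => simp [qbinom_eq_qb, qb_zero_right]
      | succ j =>
          simp only [Nat.succ_ne_zero, if_false]
          rw [show 0 + (j + 1) - 1 = j by omega, qbinom_eq_qb, qb_eq_zero (by omega)]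
  | succ n ih =>
      rw [Finset.prod_range_succ, ← mul_assoc]
      calc (PowerSeries.mk fun k => qbinom (n + 1 + k - 1) k) *
            (∏ s ∈ Finset.range n,
              (1 - PowerSeries.C (R := Polynomial ℤ) (Polynomial.X ^ s) * PowerSeries.X)) *
            (1 - PowerSeries.C (R := Polynomial ℤ) (Polynomial.X ^ n) * PowerSeries.X)
          = ((PowerSeries.mk fun k => qbinom (n + 1 + k - 1) k) *
              (1 - PowerSeries.C (R := Polynomial ℤ) (Polynomial.X ^ n) * PowerSeries.X)) *
            (∏ s ∈ Finset.range n,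
              (1 - PowerSeries.C (R := Polynomial ℤ) (Polynomial.X ^ s) * PowerSeries.X)) := by ring
        _ = 1 := by rw [qbinom_step, ih]
end
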